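/- Let k ≥ 2, β_k = 1/(2k+2), and let Ŷ(k) be the (2k+1)×(2k+1) symmetric matrix with all diagonal entries 2, entries Ŷ_{i,i+1} = Ŷ_{i+1,i} alternating 1-β_k, 1+β_k, 1-β_k, ... for i = 1,...,2k, corner entries Ŷ_{1,2k+1} = Ŷ_{2k+1,1} = 1+β_k, and all other entries 0. Then Ŷ(k) is positive definite. -/

import Mathlib

/-- The `(2k+1)×(2k+1)` matrix `Ŷ(k)`: diagonal entries `2`, super/subdiagonal
entries alternating `1-β_k, 1+β_k, …` (in terms of the `1`-based index
`a = i+1`), corner entries `1+β_k`, all other entries `0`, where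
`β_k = 1/(2k+2)`. -/
noncomputable def Yhat (k : ℕ) : Matrix (Fin (2*k+1)) (Fin (2*k+1)) ℝ :=
  Matrix.of fun i j =>
    let a := (i : ℕ) + 1
    let b := (j : ℕ) + 1
    let β : ℝ := 1 / (2 * (k : ℝ) + 2)
    if a = b then 2
    else if b = a + 1 then (if Odd a then 1 - β else 1 + β)
    else if a = b + 1 then (if Odd b then 1 - β else 1 + β)
    else if (a = 1 ∧ b = 2*k+1) ∨ (a = 2*k+1 ∧ b = 1) then 1 + β
    else 0

open Finset Matrix

noncomputable def bbb (k : ℕ) : ℝ := 1 / (2 * (k : ℝ) + 2)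

noncomputable def ccc (k i : ℕ) : ℝ := if Odd (i+1) then 1 - bbb k else 1 + bbb k

noncomputable def gg (k i j : ℕ) : ℝ :=
  if i + 1 = j + 1 then 2
  else if j + 1 = (i+1) + 1 then (if Odd (i+1) then 1 - bbb k else 1 + bbb k)
  else if i + 1 = (j+1) + 1 then (if Odd (j+1) then 1 - bbb k else 1 + bbb k)
  else if (i + 1 = 1 ∧ j + 1 = 2*k+1) ∨ (i + 1 = 2*k+1 ∧ j + 1 = 1) then 1 + bbb k
  else 0

lemma bbb_pos (k : ℕ) : 0 < bbb k := by
  have : (0:ℝ) ≤ (k:ℝ) := Nat.cast_nonneg k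
  unfold bbb; positivity

lemma ccc_succ (k i : ℕ) : ccc k (i+1) = 2 - ccc k i := by
  unfold ccc
  by_cases h : Odd (i+1)
  · rw [if_pos h, if_neg (by rw [Nat.odd_add_one]; exact not_not_intro h)]; ring
  · rw [if_neg h, if_pos (by rw [Nat.odd_add_one]; exact h)]; ring

lemma ccc_ge (k i : ℕ) : 1 - bbb k ≤ ccc k i := by
  unfold ccc; split_ifs
  · exact le_refl _
  · linarith [bbb_pos k]

lemma ccc_one (k : ℕ) : ccc k 1 = 1 + bbb k := by
  unfold ccc; rw [if_neg]; simp [Nat.odd_iff]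

lemma ccc_top (k : ℕ) : ccc k (2*k) = 1 - bbb k := by
  unfold ccc; rw [if_pos ⟨k, by ring⟩]

lemma tele (X : ℕ → ℝ) : ∀ m, ∑ i ∈ Finset.range m, (-1:ℝ)^(i+1) * (X i + X (i+1))
    = (-1)^m * X m - X 0 := by
  intro m
  induction m with
  | zero => simp
  | succ m ih => rw [Finset.sum_range_succ, ih, pow_succ]; ring

lemma diagsum (k : ℕ) (X : ℕ → ℝ) : ∀ m, ∑ i ∈ Finset.range m, ccc k i * (X i ^ 2 + X (i+1) ^ 2)
    = 2 * ∑ i ∈ Finset.range (m+1), X i ^ 2 - ccc k 1 * X 0 ^ 2 - ccc k m * X m ^ 2 := by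
  intro m
  induction m with
  | zero => rw [ccc_succ k 0]; simp; ring
  | succ m ih =>
      rw [Finset.sum_range_succ, ih, ccc_succ k m,
        Finset.sum_range_succ (fun i => X i ^ 2) (m+1)]
      ring

set_option maxHeartbeats 1000000 in
lemma gg_decomp (k : ℕ) (hk : 2 ≤ k) (X : ℕ → ℝ) (i j : ℕ) :
    X i * gg k i j * X j =
      (if i = j then 2 * X i * X j else 0)
      + (if j = i + 1 then X i * ccc k i * X j else 0)
      + (if i = j + 1 then X i * ccc k j * X j else 0)
      + ((if j = 2*k then (if i = 0 then X i * (1 + bbb k) * X j else 0) else 0)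
         + (if j = 0 then (if i = 2*k then X i * (1 + bbb k) * X j else 0) else 0)) := by
  have e1 : ∀ m, (if Odd (m+1) then 1 - bbb k else 1 + bbb k) = ccc k m := fun _ => rfl
  unfold gg
  rw [e1, e1]
  split_ifs <;> first | (exfalso; omega) | ring

/-- For `k ≥ 2`, the matrix `Ŷ(k)` is positive definite. -/
theorem stmt12 (k : ℕ) (hk : 2 ≤ k) : (Yhat k).PosDef := by
  rw [Matrix.posDef_iff_dotProduct_mulVec]
  constructor
  · -- Hermitian
    ext i j
    simp only [Matrix.conjTranspose_apply, star_trivial, Yhat, Matrix.of_apply, Nat.odd_iff]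
    split_ifs <;> first | rfl | omega
  · intro x hx
    have hstar : star x = x := funext fun i => star_trivial _
    rw [hstar]
    set X : ℕ → ℝ := fun i => if h : i < 2*k+1 then x ⟨i, h⟩ else 0 with hXdef
    have hXval : ∀ (i : Fin (2*k+1)), X ↑i = x i := by
      intro i
      simp only [hXdef]
      rw [dif_pos i.isLt]
    -- Step 1: quadratic form as a double range sum
    have hQ1 : dotProduct x (Yhat k *ᵥ x)
        = ∑ i ∈ range (2*k+1), ∑ j ∈ range (2*k+1), X i * gg k i j * X j := by
      have hrow : ∀ (i : Fin (2*k+1)), x i * (Yhat k *ᵥ x) i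
          = ∑ j ∈ range (2*k+1), X ↑i * gg k ↑i j * X j := by
        intro i
        rw [Matrix.mulVec, dotProduct, Finset.mul_sum,
          ← Fin.sum_univ_eq_sum_range (fun j => X ↑i * gg k ↑i j * X j) (2*k+1)]
        refine Finset.sum_congr rfl fun j _ => ?_
        have hYg : Yhat k i j = gg k ↑i ↑j := rfl
        rw [hXval i, hXval j, hYg]
        ring
      rw [dotProduct]
      rw [Finset.sum_congr rfl (fun i _ => hrow i),
        Fin.sum_univ_eq_sum_range (fun i => ∑ j ∈ range (2*k+1), X i * gg k i j * X j) (2*k+1)]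
    -- Step 2: evaluate the double sum
    have hQ2 : dotProduct x (Yhat k *ᵥ x)
        = ∑ i ∈ range (2*k+1), 2 * X i ^ 2
          + ∑ i ∈ range (2*k), X i * ccc k i * X (i+1)
          + ∑ i ∈ range (2*k), X i * ccc k i * X (i+1)
          + (X 0 * (1 + bbb k) * X (2*k) + X (2*k) * (1 + bbb k) * X 0) := by
      have hE1 : ∑ i ∈ range (2*k+1), ∑ j ∈ range (2*k+1), (if i = j then 2 * X i * X j else 0)
          = ∑ i ∈ range (2*k+1), 2 * X i ^ 2 := by
        refine Finset.sum_congr rfl fun i hi => ?_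
        rw [Finset.sum_ite_eq (range (2*k+1)) i (fun j => 2 * X i * X j), if_pos hi]
        ring
      have hE2 : ∑ i ∈ range (2*k+1), ∑ j ∈ range (2*k+1), (if j = i + 1 then X i * ccc k i * X j else 0)
          = ∑ i ∈ range (2*k), X i * ccc k i * X (i+1) := by
        have h1 : ∀ i, ∑ j ∈ range (2*k+1), (if j = i + 1 then X i * ccc k i * X j else 0)
            = if i + 1 ∈ range (2*k+1) then X i * ccc k i * X (i+1) else 0 := fun i =>
          Finset.sum_ite_eq' (range (2*k+1)) (i+1) (fun j => X i * ccc k i * X j)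
        simp only [h1]
        rw [Finset.sum_range_succ, if_neg (by simp), add_zero]
        refine Finset.sum_congr rfl fun i hi => ?_
        rw [if_pos (by simp at hi ⊢; omega)]
      have hE3 : ∑ i ∈ range (2*k+1), ∑ j ∈ range (2*k+1), (if i = j + 1 then X i * ccc k j * X j else 0)
          = ∑ i ∈ range (2*k), X i * ccc k i * X (i+1) := by
        rw [Finset.sum_comm]
        have h1 : ∀ j, ∑ i ∈ range (2*k+1), (if i = j + 1 then X i * ccc k j * X j else 0)
            = if j + 1 ∈ range (2*k+1) then X (j+1) * ccc k j * X j else 0 := fun j =>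
          Finset.sum_ite_eq' (range (2*k+1)) (j+1) (fun i => X i * ccc k j * X j)
        simp only [h1]
        rw [Finset.sum_range_succ, if_neg (by simp), add_zero]
        refine Finset.sum_congr rfl fun j hj => ?_
        rw [if_pos (by simp at hj ⊢; omega)]
        ring
      have h2k : 2*k ∈ range (2*k+1) := by simp
      have h00 : 0 ∈ range (2*k+1) := by simp
      have hE4a : ∑ i ∈ range (2*k+1), ∑ j ∈ range (2*k+1),
            (if j = 2*k then (if i = 0 then X i * (1 + bbb k) * X j else 0) else 0)
          = X 0 * (1 + bbb k) * X (2*k) := by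
        have h1 : ∀ i, ∑ j ∈ range (2*k+1),
              (if j = 2*k then (if i = 0 then X i * (1 + bbb k) * X j else 0) else 0)
            = if i = 0 then X i * (1 + bbb k) * X (2*k) else 0 := by
          intro i
          rw [Finset.sum_ite_eq' (range (2*k+1)) (2*k)
            (fun j => if i = 0 then X i * (1 + bbb k) * X j else 0), if_pos h2k]
        simp only [h1]
        rw [Finset.sum_ite_eq' (range (2*k+1)) 0 (fun i => X i * (1 + bbb k) * X (2*k)),
          if_pos h00]
      have hE4b : ∑ i ∈ range (2*k+1), ∑ j ∈ range (2*k+1),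
            (if j = 0 then (if i = 2*k then X i * (1 + bbb k) * X j else 0) else 0)
          = X (2*k) * (1 + bbb k) * X 0 := by
        have h1 : ∀ i, ∑ j ∈ range (2*k+1),
              (if j = 0 then (if i = 2*k then X i * (1 + bbb k) * X j else 0) else 0)
            = if i = 2*k then X i * (1 + bbb k) * X 0 else 0 := by
          intro i
          rw [Finset.sum_ite_eq' (range (2*k+1)) 0
            (fun j => if i = 2*k then X i * (1 + bbb k) * X j else 0), if_pos h00]
        simp only [h1]
        rw [Finset.sum_ite_eq' (range (2*k+1)) (2*k) (fun i => X i * (1 + bbb k) * X 0),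
          if_pos h2k]
      rw [hQ1]
      rw [Finset.sum_congr rfl (fun i _ => Finset.sum_congr rfl
        (fun j _ => gg_decomp k hk X i j))]
      simp only [Finset.sum_add_distrib]
      rw [hE1, hE2, hE3, hE4a, hE4b]
    -- Step 3: sum-of-squares form
    have hSOS : dotProduct x (Yhat k *ᵥ x)
        = ∑ i ∈ range (2*k), ccc k i * (X i + X (i+1)) ^ 2
          + (1 + bbb k) * (X 0 + X (2*k)) ^ 2 - 2 * bbb k * X (2*k) ^ 2 := by
      rw [hQ2]
      have hexp : ∑ i ∈ range (2*k), ccc k i * (X i + X (i+1)) ^ 2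
          = ∑ i ∈ range (2*k), ccc k i * (X i ^ 2 + X (i+1) ^ 2)
            + ∑ i ∈ range (2*k), 2 * (X i * ccc k i * X (i+1)) := by
        rw [← Finset.sum_add_distrib]
        exact Finset.sum_congr rfl fun i _ => by ring
      rw [hexp, diagsum k X (2*k), ccc_one, ccc_top]
      rw [Finset.mul_sum]
      have hdist : ∑ i ∈ range (2*k), 2 * (X i * ccc k i * X (i+1))
          = ∑ i ∈ range (2*k), X i * ccc k i * X (i+1)
            + ∑ i ∈ range (2*k), X i * ccc k i * X (i+1) := by
        rw [← Finset.sum_add_distrib]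
        exact Finset.sum_congr rfl fun i _ => by ring
      rw [hdist]
      ring
    -- Step 4: positivity
    set V : ℕ → ℝ := fun i => if i = 2*k then X 0 + X (2*k) else X i + X (i+1) with hVdef
    set s : ℕ → ℝ := fun i => if i = 2*k then 1 else (-1)^(i+1) with hsdef
    have hsumsv : ∑ i ∈ range (2*k+1), s i * V i = 2 * X (2*k) := by
      rw [Finset.sum_range_succ]
      have hlast : s (2*k) * V (2*k) = X 0 + X (2*k) := by
        simp only [hsdef, hVdef, if_pos rfl]; ring
      have hmain : ∑ i ∈ range (2*k), s i * V i
          = ∑ i ∈ range (2*k), (-1:ℝ)^(i+1) * (X i + X (i+1)) := by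
        refine Finset.sum_congr rfl fun i hi => ?_
        have : i ≠ 2*k := by simp at hi; omega
        simp only [hsdef, hVdef, if_neg this]
      rw [hlast, hmain, tele X (2*k)]
      have : (-1:ℝ)^(2*k) = 1 := by rw [pow_mul]; norm_num
      rw [this]; ring
    have hs2 : ∑ i ∈ range (2*k+1), s i ^ 2 = ((2*k+1 : ℕ) : ℝ) := by
      have : ∀ i ∈ range (2*k+1), s i ^ 2 = 1 := by
        intro i _
        simp only [hsdef]
        split_ifs
        · norm_num
        · rw [← pow_mul, mul_comm, pow_mul]; norm_num
      rw [Finset.sum_congr rfl this, Finset.sum_const, card_range, nsmul_eq_mul, mul_one]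
    have hW0 : (0:ℝ) ≤ ∑ i ∈ range (2*k+1), V i ^ 2 :=
      Finset.sum_nonneg fun i _ => sq_nonneg _
    have hcs : (2 * X (2*k)) ^ 2 ≤ ((2*k+1 : ℕ) : ℝ) * ∑ i ∈ range (2*k+1), V i ^ 2 := by
      rw [← hsumsv, ← hs2]
      exact Finset.sum_mul_sq_le_sq_mul_sq (range (2*k+1)) s V
    have hlow : (1 - bbb k) * ∑ i ∈ range (2*k+1), V i ^ 2
        ≤ ∑ i ∈ range (2*k), ccc k i * (X i + X (i+1)) ^ 2
          + (1 + bbb k) * (X 0 + X (2*k)) ^ 2 := by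
      have hsplit : ∑ i ∈ range (2*k), ccc k i * (X i + X (i+1)) ^ 2
            + (1 + bbb k) * (X 0 + X (2*k)) ^ 2
          = ∑ i ∈ range (2*k+1), (if i = 2*k then 1 + bbb k else ccc k i) * V i ^ 2 := by
        rw [Finset.sum_range_succ]
        congr 1
        · refine Finset.sum_congr rfl fun i hi => ?_
          have h1 : i ≠ 2*k := by simp at hi; omega
          simp only [hVdef, if_neg h1]
        · norm_num [hVdef]
      rw [hsplit, Finset.mul_sum]
      refine Finset.sum_le_sum fun i _ => ?_
      refine mul_le_mul_of_nonneg_right ?_ (sq_nonneg _)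
      split_ifs
      · linarith [bbb_pos k]
      · exact ccc_ge k i
    -- combine
    have hb := bbb_pos k
    have hcoef : (1 - bbb k) - bbb k / 2 * ((2*k+1 : ℕ) : ℝ) = (2*(k:ℝ)+1) / (4*(k:ℝ)+4) := by
      have hcast : ((2*k+1 : ℕ) : ℝ) = 2*(k:ℝ)+1 := by push_cast; ring
      rw [hcast]
      unfold bbb
      have h1 : (2*(k:ℝ)+2) ≠ 0 := by positivity
      field_simp
      ring
    have hWpos : 0 < ∑ i ∈ range (2*k+1), V i ^ 2 := by
      rcases lt_or_eq_of_le hW0 with h | h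
      · exact h
      · exfalso
        have hV0 : ∀ i ∈ range (2*k+1), V i = 0 := by
          intro i hi
          have := (Finset.sum_eq_zero_iff_of_nonneg (fun j (_ : j ∈ range (2*k+1)) => sq_nonneg (V j))).mp h.symm i hi
          exact pow_eq_zero_iff (n := 2) (by norm_num) |>.mp this
        have hX2k : X (2*k) = 0 := by
          have : ∑ i ∈ range (2*k+1), s i * V i = 0 :=
            Finset.sum_eq_zero fun i hi => by rw [hV0 i hi, mul_zero]
          rw [hsumsv] at this; linarith
        have hX0 : X 0 = 0 := by
          have h2k : 2*k ∈ range (2*k+1) := by simp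
          have := hV0 (2*k) h2k
          simp only [hVdef, if_pos rfl] at this
          linarith
        have hall : ∀ i, i ≤ 2*k → X i = 0 := by
          intro i
          induction i with
          | zero => intro _; exact hX0
          | succ m ih =>
              intro hm
              by_cases hmtop : m + 1 = 2*k
              · rw [hmtop]; exact hX2k
              · have hm' : X m = 0 := ih (by omega)
                have hmem : m ∈ range (2*k+1) := by simp; omega
                have hv := hV0 m hmem
                have hne : m ≠ 2*k := by omega
                simp only [hVdef, if_neg hne] at hv
                linarith
        apply hx
        funext j
        have hj : (j : ℕ) ≤ 2*k := by omega
        have h0 := hall (j : ℕ) hj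
        show x j = 0
        rw [← hXval j]
        exact h0
    calc (0:ℝ) < (2*(k:ℝ)+1) / (4*(k:ℝ)+4) * ∑ i ∈ range (2*k+1), V i ^ 2 := by positivity
      _ = ((1 - bbb k) - bbb k / 2 * ((2*k+1 : ℕ) : ℝ)) * ∑ i ∈ range (2*k+1), V i ^ 2 := by rw [hcoef]
      _ = (1 - bbb k) * (∑ i ∈ range (2*k+1), V i ^ 2)
            - bbb k / 2 * (((2*k+1 : ℕ) : ℝ) * ∑ i ∈ range (2*k+1), V i ^ 2) := by ring
      _ ≤ (1 - bbb k) * (∑ i ∈ range (2*k+1), V i ^ 2) - bbb k / 2 * (2 * X (2*k)) ^ 2 := by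
            have := mul_le_mul_of_nonneg_left hcs (le_of_lt (by linarith : (0:ℝ) < bbb k / 2))
            linarith
      _ ≤ (∑ i ∈ range (2*k), ccc k i * (X i + X (i+1)) ^ 2
            + (1 + bbb k) * (X 0 + X (2*k)) ^ 2) - 2 * bbb k * X (2*k) ^ 2 := by
            have h1 : bbb k / 2 * (2 * X (2*k)) ^ 2 = 2 * bbb k * X (2*k) ^ 2 := by ring
            linarith [hlow]
      _ = dotProduct x (Yhat k *ᵥ x) := by rw [hSOS]
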